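/- For ν > 0, the integral 2 ∫₀^∞ (y √(ν² y² + t) − ν y²) φ(y) dy equals √(2t/π) + ν (2 e^{t/(2ν²)} (1 − Φ(√t/ν)) − 1), where φ(y) = (1/√(2π)) e^{−y²/2} and Φ is the standard Gaussian CDF, for every t > 0. -/

import Mathlib

open MeasureTheory Real Filter Topology Set

/-- The standard Gaussian density. -/
noncomputable def stdGaussianPDF (y : ℝ) : ℝ :=
  (Real.sqrt (2 * Real.pi))⁻¹ * Real.exp (-y ^ 2 / 2)

/-- The standard Gaussian cumulative distribution function. -/
noncomputable def stdGaussianCDF (x : ℝ) : ℝ :=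
  ∫ y in Set.Iic x, stdGaussianPDF y

lemma pdf_eq (y : ℝ) : stdGaussianPDF y = (Real.sqrt (2*Real.pi))⁻¹ * Real.exp (-(1/2) * y^2) := by
  rw [stdGaussianPDF]; ring_nf

lemma integrable_pdf : Integrable stdGaussianPDF := by
  have h := (integrable_exp_neg_mul_sq (by norm_num : (0:ℝ) < 1/2)).const_mul (Real.sqrt (2*Real.pi))⁻¹
  exact h.congr (Eventually.of_forall fun y => (pdf_eq y).symm)

lemma integral_pdf : ∫ y, stdGaussianPDF y = 1 := by
  have h : ∫ y : ℝ, Real.exp (-(1/2) * y^2) = Real.sqrt (Real.pi / (1/2)) := integral_gaussian (1/2)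
  calc ∫ y, stdGaussianPDF y = (Real.sqrt (2*Real.pi))⁻¹ * ∫ y : ℝ, Real.exp (-(1/2) * y^2) := by
        rw [← integral_const_mul]; exact integral_congr_ae (Eventually.of_forall fun y => pdf_eq y)
    _ = 1 := by
        rw [h]
        rw [show Real.pi / (1/2) = 2*Real.pi by ring]
        rw [inv_mul_cancel₀]
        positivity

lemma continuous_pdf : Continuous stdGaussianPDF := by
  unfold stdGaussianPDF; fun_prop


lemma cdf_eq (y : ℝ) : stdGaussianCDF y = stdGaussianCDF 0 + ∫ s in (0:ℝ)..y, stdGaussianPDF s := by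
  have h := intervalIntegral.integral_Iic_sub_Iic (integrable_pdf.integrableOn (s := Set.Iic 0))
    (integrable_pdf.integrableOn (s := Set.Iic y))
  rw [stdGaussianCDF, stdGaussianCDF, ← h]; ring

lemma hasDerivAt_cdf (x : ℝ) : HasDerivAt stdGaussianCDF (stdGaussianPDF x) x := by
  have h : HasDerivAt (fun y => stdGaussianCDF 0 + ∫ s in (0:ℝ)..y, stdGaussianPDF s)
      (stdGaussianPDF x) x := by
    apply HasDerivAt.const_add
    exact intervalIntegral.integral_hasDerivAt_right (integrable_pdf.intervalIntegrable)
      (continuous_pdf.stronglyMeasurableAtFilter _ _) continuous_pdf.continuousAt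
  exact h.congr_of_eventuallyEq (Eventually.of_forall fun y => cdf_eq y)

lemma cdf_zero : stdGaussianCDF 0 = 1/2 := by
  have h1 : stdGaussianCDF 0 + ∫ y in Set.Ioi (0:ℝ), stdGaussianPDF y = 1 := by
    rw [stdGaussianCDF, intervalIntegral.integral_Iic_add_Ioi integrable_pdf.integrableOn
      integrable_pdf.integrableOn, integral_pdf]
  have h2 : stdGaussianCDF 0 = ∫ y in Set.Ioi (0:ℝ), stdGaussianPDF y := by
    rw [stdGaussianCDF, show Set.Ioi (0:ℝ) = Set.Ioi (-0 : ℝ) by norm_num,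
      ← integral_comp_neg_Iic]
    congr 1; ext y; rw [stdGaussianPDF, stdGaussianPDF]; ring_nf
  linarith

lemma tendsto_cdf_atTop : Tendsto stdGaussianCDF atTop (𝓝 1) := by
  have h : Tendsto (fun y => stdGaussianCDF 0 + ∫ s in (0:ℝ)..y, stdGaussianPDF s) atTop
      (𝓝 (stdGaussianCDF 0 + ∫ s in Set.Ioi (0:ℝ), stdGaussianPDF s)) :=
    tendsto_const_nhds.add
      (intervalIntegral_tendsto_integral_Ioi 0 integrable_pdf.integrableOn tendsto_id)
  have he : stdGaussianCDF 0 + ∫ s in Set.Ioi (0:ℝ), stdGaussianPDF s = 1 := by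
    rw [stdGaussianCDF, intervalIntegral.integral_Iic_add_Ioi integrable_pdf.integrableOn
      integrable_pdf.integrableOn, integral_pdf]
  rw [← he]
  exact h.congr fun y => (cdf_eq y).symm

lemma sqrt_add_le (a b : ℝ) (ha : 0 ≤ a) (hb : 0 ≤ b) :
    Real.sqrt (a + b) ≤ Real.sqrt a + Real.sqrt b := by
  have h : a + b ≤ (Real.sqrt a + Real.sqrt b)^2 := by
    nlinarith [Real.sq_sqrt ha, Real.sq_sqrt hb, Real.sqrt_nonneg a, Real.sqrt_nonneg b,
      mul_nonneg (Real.sqrt_nonneg a) (Real.sqrt_nonneg b)]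
  calc Real.sqrt (a+b) ≤ Real.sqrt ((Real.sqrt a + Real.sqrt b)^2) := Real.sqrt_le_sqrt h
    _ = Real.sqrt a + Real.sqrt b := Real.sqrt_sq (by positivity)

/-- For `ν > 0` and `t > 0`,
`2 ∫₀^∞ (y √(ν² y² + t) − ν y²) φ(y) dy
  = √(2t/π) + ν (2 e^{t/(2ν²)} (1 − Φ(√t/ν)) − 1)`. -/
theorem gaussian_integral_identity (ν t : ℝ) (hν : 0 < ν) (ht : 0 < t) :
    2 * ∫ y in Set.Ioi (0:ℝ),
        (y * Real.sqrt (ν ^ 2 * y ^ 2 + t) - ν * y ^ 2) * stdGaussianPDF y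
      = Real.sqrt (2 * t / Real.pi)
        + ν * (2 * Real.exp (t / (2 * ν ^ 2)) * (1 - stdGaussianCDF (Real.sqrt t / ν)) - 1) := by
  have harg : ∀ y : ℝ, (0:ℝ) < y^2 + t/ν^2 := fun y => by positivity
  have hargu : ∀ y : ℝ, (0:ℝ) < ν^2*y^2 + t := fun y => by positivity
  have hu : ∀ y : ℝ, Real.sqrt (ν^2*y^2+t) = ν * Real.sqrt (y^2+t/ν^2) := by
    intro y
    rw [show ν^2*y^2+t = ν^2 * (y^2 + t/ν^2) by field_simp,
      Real.sqrt_mul (sq_nonneg ν), Real.sqrt_sq hν.le]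
  set f : ℝ → ℝ := fun y =>
    (ν*y - Real.sqrt (ν^2*y^2+t)) * Real.exp (-y^2/2) * (Real.sqrt (2*Real.pi))⁻¹
    - ν * Real.exp (t/(2*ν^2)) * (1 - stdGaussianCDF (Real.sqrt (y^2 + t/ν^2)))
    - ν * stdGaussianCDF y with hf
  have hderiv : ∀ y : ℝ,
      HasDerivAt f ((y * Real.sqrt (ν^2*y^2+t) - ν*y^2) * stdGaussianPDF y) y := by
    intro y
    have hwpos : 0 < Real.sqrt (y^2 + t/ν^2) := Real.sqrt_pos.2 (harg y)
    have dq1 : HasDerivAt (fun x : ℝ => ν^2*x^2+t) (ν^2*(2*y)) y := by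
      simpa using ((hasDerivAt_pow 2 y).const_mul (ν^2)).add_const t
    have dsq1 : HasDerivAt (fun x => Real.sqrt (ν^2*x^2+t))
        (1/(2*Real.sqrt (ν^2*y^2+t)) * (ν^2*(2*y))) y :=
      (Real.hasDerivAt_sqrt (ne_of_gt (hargu y))).comp y dq1
    have dq2 : HasDerivAt (fun x : ℝ => x^2 + t/ν^2) (2*y) y := by
      simpa using (hasDerivAt_pow 2 y).add_const (t/ν^2)
    have dsq2 : HasDerivAt (fun x => Real.sqrt (x^2+t/ν^2))
        (1/(2*Real.sqrt (y^2+t/ν^2)) * (2*y)) y :=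
      (Real.hasDerivAt_sqrt (ne_of_gt (harg y))).comp y dq2
    have dexp : HasDerivAt (fun x : ℝ => Real.exp (-x^2/2))
        (Real.exp (-y^2/2) * (-(2*y^1)/2)) y := by
      exact ((((hasDerivAt_pow 2 y)).neg.div_const 2)).exp
    have dcdf2 : HasDerivAt (fun x => stdGaussianCDF (Real.sqrt (x^2+t/ν^2)))
        (stdGaussianPDF (Real.sqrt (y^2+t/ν^2)) * (1/(2*Real.sqrt (y^2+t/ν^2)) * (2*y))) y :=
      (hasDerivAt_cdf _).comp y dsq2
    have d1 : HasDerivAt (fun x => (ν*x - Real.sqrt (ν^2*x^2+t)) * Real.exp (-x^2/2)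
          * (Real.sqrt (2*Real.pi))⁻¹)
        (((ν * 1 - 1/(2*Real.sqrt (ν^2*y^2+t)) * (ν^2*(2*y))) * Real.exp (-y^2/2)
          + (ν*y - Real.sqrt (ν^2*y^2+t)) * (Real.exp (-y^2/2) * (-(2*y^1)/2)))
          * (Real.sqrt (2*Real.pi))⁻¹) y := by
      exact ((((hasDerivAt_id y).const_mul ν).sub dsq1).mul dexp).mul_const _
    have d2 : HasDerivAt (fun x => ν * Real.exp (t/(2*ν^2))
          * (1 - stdGaussianCDF (Real.sqrt (x^2 + t/ν^2))))
        (ν * Real.exp (t/(2*ν^2)) * (0 - stdGaussianPDF (Real.sqrt (y^2+t/ν^2))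
          * (1/(2*Real.sqrt (y^2+t/ν^2)) * (2*y)))) y :=
      ((hasDerivAt_const y (1:ℝ)).sub dcdf2).const_mul _
    have d3 : HasDerivAt (fun x => ν * stdGaussianCDF x) (ν * stdGaussianPDF y) y :=
      (hasDerivAt_cdf y).const_mul ν
    have dtot := (d1.sub d2).sub d3
    convert dtot using 1
    · rfl
    · rfl
    · rfl
    -- value identity
    have hw2 : (Real.sqrt (y^2 + t/ν^2))^2 = y^2 + t/ν^2 := Real.sq_sqrt (harg y).le
    have hpdfw : stdGaussianPDF (Real.sqrt (y^2 + t/ν^2))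
        = Real.exp (-y^2/2) * (Real.exp (t/(2*ν^2)))⁻¹ * (Real.sqrt (2*Real.pi))⁻¹ := by
      rw [stdGaussianPDF, hw2, ← Real.exp_neg, ← Real.exp_add]
      rw [show -(y^2 + t/ν^2)/2 = -y^2/2 + -(t/(2*ν^2)) by field_simp; ring]
      ring
    rw [stdGaussianPDF, hpdfw, hu y]
    field_simp
    ring
  have hint : IntegrableOn
      (fun y => (y * Real.sqrt (ν^2*y^2+t) - ν*y^2) * stdGaussianPDF y) (Set.Ioi 0) := by
    have hg2 : IntegrableOn (fun y : ℝ => y^2 * Real.exp (-(1/2:ℝ)*y^2)) (Set.Ioi 0) := by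
      refine (integrableOn_rpow_mul_exp_neg_mul_sq (by norm_num : (0:ℝ) < 1/2)
        (by norm_num : (-1:ℝ) < 2)).congr_fun (fun x _ => ?_) measurableSet_Ioi
      beta_reduce; rw [show (2:ℝ) = ((2:ℕ):ℝ) by norm_num, Real.rpow_natCast]
    have hg1 : IntegrableOn (fun y : ℝ => y * Real.exp (-(1/2:ℝ)*y^2)) (Set.Ioi 0) := by
      refine (integrableOn_rpow_mul_exp_neg_mul_sq (by norm_num : (0:ℝ) < 1/2)
        (by norm_num : (-1:ℝ) < 1)).congr_fun (fun x _ => ?_) measurableSet_Ioi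
      beta_reduce; rw [Real.rpow_one]
    have hg : IntegrableOn
        (fun y => (2*ν*y^2 + Real.sqrt t * y) * stdGaussianPDF y) (Set.Ioi 0) := by
      have hsum : IntegrableOn (fun x : ℝ =>
          2*ν*(Real.sqrt (2*Real.pi))⁻¹ * (x^2 * Real.exp (-(1/2:ℝ)*x^2))
          + Real.sqrt t * (Real.sqrt (2*Real.pi))⁻¹ * (x * Real.exp (-(1/2:ℝ)*x^2)))
          (Set.Ioi 0) :=
        (hg2.const_mul _).add (hg1.const_mul _)
      refine hsum.congr_fun (fun x _ => ?_) measurableSet_Ioi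
      simp only [stdGaussianPDF]; ring_nf
    refine hg.mono' ?_ ?_
    · apply Continuous.aestronglyMeasurable
      apply Continuous.mul ?_ continuous_pdf
      apply Continuous.sub
      · exact continuous_id.mul (Real.continuous_sqrt.comp (by continuity))
      · continuity
    · refine (ae_restrict_iff' measurableSet_Ioi).2 (Filter.Eventually.of_forall fun y hy => ?_)
      have hy0 : (0:ℝ) < y := hy
      have hpdf_pos : 0 ≤ stdGaussianPDF y := by rw [stdGaussianPDF]; positivity
      have husq : Real.sqrt (ν^2*y^2+t) ≤ ν*y + Real.sqrt t := by
        calc Real.sqrt (ν^2*y^2+t) ≤ Real.sqrt (ν^2*y^2) + Real.sqrt t :=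
              sqrt_add_le _ _ (by positivity) ht.le
          _ = ν*y + Real.sqrt t := by
              rw [show ν^2*y^2 = (ν*y)^2 by ring, Real.sqrt_sq (by positivity)]
      have hunn : 0 ≤ Real.sqrt (ν^2*y^2+t) := Real.sqrt_nonneg _
      rw [Real.norm_eq_abs, abs_mul, abs_of_nonneg hpdf_pos]
      apply mul_le_mul_of_nonneg_right _ hpdf_pos
      rw [abs_le]
      constructor <;> nlinarith [Real.sqrt_nonneg t]
  have htend : Filter.Tendsto f atTop (𝓝 (-ν)) := by
    have hexp0 : Filter.Tendsto (fun y : ℝ => Real.exp (-y^2/2)) atTop (𝓝 0) := by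
      have h := Real.tendsto_exp_neg_atTop_nhds_zero.comp
        ((tendsto_pow_atTop (two_ne_zero)).atTop_div_const (by norm_num : (0:ℝ) < 2))
      refine h.congr fun y => ?_
      simp [Function.comp, neg_div]
    have t1 : Filter.Tendsto (fun y => (ν*y - Real.sqrt (ν^2*y^2+t)) * Real.exp (-y^2/2)
        * (Real.sqrt (2*Real.pi))⁻¹) atTop (𝓝 0) := by
      apply squeeze_zero_norm' (a := fun y => Real.sqrt t * Real.exp (-y^2/2)
        * (Real.sqrt (2*Real.pi))⁻¹)
      · filter_upwards [Filter.eventually_ge_atTop (0:ℝ)] with y hy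
        have h1 : ν*y ≤ Real.sqrt (ν^2*y^2+t) := by
          rw [show ν*y = Real.sqrt ((ν*y)^2) from (Real.sqrt_sq (by positivity)).symm]
          exact Real.sqrt_le_sqrt (by nlinarith)
        have h2 : Real.sqrt (ν^2*y^2+t) ≤ ν*y + Real.sqrt t := by
          calc Real.sqrt (ν^2*y^2+t) ≤ Real.sqrt (ν^2*y^2) + Real.sqrt t :=
                sqrt_add_le _ _ (by positivity) ht.le
            _ = ν*y + Real.sqrt t := by
                rw [show ν^2*y^2 = (ν*y)^2 by ring, Real.sqrt_sq (by positivity)]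
        have hb : |ν*y - Real.sqrt (ν^2*y^2+t)| ≤ Real.sqrt t := by
          rw [abs_le]; constructor <;> nlinarith [Real.sqrt_nonneg t]
        rw [Real.norm_eq_abs, abs_mul, abs_mul]
        rw [abs_of_nonneg (Real.exp_pos _).le, abs_of_nonneg (by positivity :
          (0:ℝ) ≤ (Real.sqrt (2*Real.pi))⁻¹)]
        apply mul_le_mul_of_nonneg_right _ (by positivity)
        exact mul_le_mul_of_nonneg_right hb (Real.exp_pos _).le
      · have := (hexp0.const_mul (Real.sqrt t)).mul_const (Real.sqrt (2*Real.pi))⁻¹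
        simpa using this
    have warg : Filter.Tendsto (fun y : ℝ => Real.sqrt (y^2+t/ν^2)) atTop atTop := by
      refine Filter.tendsto_atTop_mono' atTop ?_ Filter.tendsto_id
      filter_upwards [Filter.eventually_ge_atTop (0:ℝ)] with y hy
      calc y = Real.sqrt (y^2) := (Real.sqrt_sq hy).symm
        _ ≤ Real.sqrt (y^2 + t/ν^2) := Real.sqrt_le_sqrt (le_add_of_nonneg_right (by positivity))
    have t2 : Filter.Tendsto (fun y : ℝ => ν * Real.exp (t/(2*ν^2))
        * (1 - stdGaussianCDF (Real.sqrt (y^2 + t/ν^2)))) atTop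
        (𝓝 (ν * Real.exp (t/(2*ν^2)) * (1-1))) :=
      (tendsto_const_nhds.sub (tendsto_cdf_atTop.comp warg)).const_mul _
    have t3 : Filter.Tendsto (fun y => ν * stdGaussianCDF y) atTop (𝓝 (ν*1)) :=
      tendsto_cdf_atTop.const_mul ν
    have h := (t1.sub t2).sub t3
    have he : (0:ℝ) - ν * Real.exp (t/(2*ν^2)) * (1-1) - ν*1 = -ν := by ring
    rw [he] at h
    exact h
  have hcont : ContinuousWithinAt f (Set.Ici 0) 0 := (hderiv 0).continuousAt.continuousWithinAt
  rw [integral_Ioi_of_hasDerivAt_of_tendsto hcont (fun x _ => hderiv x) hint htend]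
  have h0 : f 0 = -Real.sqrt t * (Real.sqrt (2*Real.pi))⁻¹
      - ν * Real.exp (t/(2*ν^2)) * (1 - stdGaussianCDF (Real.sqrt t / ν)) - ν * (1/2) := by
    rw [hf]
    have e1 : Real.sqrt (ν^2*(0:ℝ)^2+t) = Real.sqrt t := by norm_num
    have e2 : Real.sqrt ((0:ℝ)^2 + t/ν^2) = Real.sqrt t / ν := by
      rw [show (0:ℝ)^2 + t/ν^2 = t/ν^2 by ring, Real.sqrt_div ht.le, Real.sqrt_sq hν.le]
    simp only [e1, e2, cdf_zero]
    norm_num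
  rw [h0]
  have hsqrt : Real.sqrt (2*t/Real.pi) = 2 * (Real.sqrt t * (Real.sqrt (2*Real.pi))⁻¹) := by
    have h1 : 2*t/Real.pi = (4*t)/(2*Real.pi) := by
      rw [div_eq_div_iff Real.pi_ne_zero (by positivity)]; ring
    rw [h1, Real.sqrt_div (by positivity), show (4:ℝ)*t = 2^2*t by norm_num,
      Real.sqrt_mul (by positivity), Real.sqrt_sq (by norm_num : (0:ℝ) ≤ 2)]
    rw [div_eq_mul_inv]; ring
  rw [hsqrt]
  ring
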